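/- Let n ≥ 1, d ≥ 1, and let f₁, …, f_n : Fin d → ℂ all be nonzero functions. Let ψ be the product state ψ j = ∏_i f_i (j i). Then the symmetrization P ψ is nonzero; equivalently, ψ has a nonzero orthogonal component on the symmetric sector. -/
import Mathlib


/-- **Product states have nonzero symmetrization.**
If `f 0, …, f (n-1) : Fin d → ℂ` are all nonzero and `ψ` is the product state
`ψ j = ∏ i, f i (j i)`, then the symmetrization `P ψ`, where
`(P ψ) j = (1/n!) ∑_{σ ∈ Perm (Fin n)} ψ (j ∘ σ)`, is nonzero. -/
theorem symmetrization_of_product_state_ne_zero (n d : ℕ) (hn : 1 ≤ n) (hd : 1 ≤ d)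
    (f : Fin n → Fin d → ℂ) (hf : ∀ i, f i ≠ 0)
    (ψ : (Fin n → Fin d) → ℂ) (hψ : ∀ j, ψ j = ∏ i, f i (j i)) :
    (fun j : Fin n → Fin d =>
      ((1 / (Nat.factorial n : ℝ) : ℝ) : ℂ) * ∑ σ : Equiv.Perm (Fin n), ψ (j ∘ σ)) ≠ 0 := by
  intro hzero
  -- the polynomials p_i(X) = ∑_a f i a * X^a
  set P : Fin n → Polynomial ℂ :=
    fun i => ∑ a : Fin d, Polynomial.C (f i a) * Polynomial.X ^ (a : ℕ) with hP
  have hPne : ∀ i, P i ≠ 0 := by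
    intro i hpi
    obtain ⟨a, ha⟩ : ∃ a, f i a ≠ 0 := by
      by_contra h; push_neg at h; exact hf i (funext h)
    apply ha
    have := congrArg (fun q => Polynomial.coeff q (a : ℕ)) hpi
    simpa [hP, Polynomial.finset_sum_coeff, Polynomial.coeff_X_pow, Fin.val_eq_val,
      Finset.sum_ite_eq'] using this
  have hQ : (∏ i, P i) ≠ 0 := Finset.prod_ne_zero_iff.mpr fun i _ => hPne i
  obtain ⟨t, ht⟩ := (Polynomial.finite_setOf_isRoot hQ).infinite_compl.nonempty
  have ht' : Polynomial.eval t (∏ i, P i) ≠ 0 := by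
    simpa [Polynomial.IsRoot] using ht
  -- the test vector x a = t^a
  set x : Fin d → ℂ := fun a => t ^ (a : ℕ) with hx
  have hsum : ∀ j : Fin n → Fin d, ∑ σ : Equiv.Perm (Fin n), ψ (j ∘ σ) = 0 := by
    intro j
    have hc : ((1 / (Nat.factorial n : ℝ) : ℝ) : ℂ) ≠ 0 := by
      simp [Nat.factorial_ne_zero]
    have h0 : ((1 / (Nat.factorial n : ℝ) : ℝ) : ℂ) * ∑ σ : Equiv.Perm (Fin n), ψ (j ∘ σ) = 0 := by
      simpa using congrFun hzero j
    exact (mul_eq_zero.mp h0).resolve_left hc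
  have step : ∀ σ : Equiv.Perm (Fin n),
      ∑ j : Fin n → Fin d, ψ (j ∘ σ) * ∏ i, x (j i) = ∏ i, Polynomial.eval t (P i) := by
    intro σ
    have h1 : ∀ j : Fin n → Fin d, ψ (j ∘ σ) * ∏ i, x (j i)
        = ∏ i, (f (σ⁻¹ i) (j i) * x (j i)) := by
      intro j
      rw [hψ]
      have hre : ∏ i, f i ((j ∘ σ) i) = ∏ i, f (σ⁻¹ i) (j i) := by
        rw [← Equiv.prod_comp σ (fun k => f (σ⁻¹ k) (j k))]
        simp
      rw [hre, ← Finset.prod_mul_distrib]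
    simp_rw [h1]
    have h3 := Finset.prod_univ_sum (fun _ : Fin n => (Finset.univ : Finset (Fin d)))
      (fun i a => f (σ⁻¹ i) a * x a)
    rw [Fintype.piFinset_univ] at h3
    rw [← h3]
    have h2 : ∀ i : Fin n, ∑ a : Fin d, f (σ⁻¹ i) a * x a
        = Polynomial.eval t (P (σ⁻¹ i)) := by
      intro i
      simp [hP, hx, Polynomial.eval_finset_sum]
    simp_rw [h2]
    exact Equiv.prod_comp σ⁻¹ (fun k => Polynomial.eval t (P k))
  have key : (0 : ℂ) = (Nat.factorial n : ℂ) * ∏ i, Polynomial.eval t (P i) := by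
    calc (0 : ℂ) = ∑ j : Fin n → Fin d, (∑ σ : Equiv.Perm (Fin n), ψ (j ∘ σ)) * ∏ i, x (j i) := by
          simp [hsum]
      _ = ∑ σ : Equiv.Perm (Fin n), ∑ j : Fin n → Fin d, ψ (j ∘ σ) * ∏ i, x (j i) := by
          rw [Finset.sum_comm]
          simp_rw [Finset.sum_mul]
      _ = ∑ σ : Equiv.Perm (Fin n), ∏ i, Polynomial.eval t (P i) := by
          simp_rw [step]
      _ = (Nat.factorial n : ℂ) * ∏ i, Polynomial.eval t (P i) := by
          simp [Finset.sum_const, Fintype.card_perm, mul_comm]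
  rw [Polynomial.eval_prod] at ht'
  have : (Nat.factorial n : ℂ) * ∏ i, Polynomial.eval t (P i) ≠ 0 :=
    mul_ne_zero (by exact_mod_cast Nat.factorial_ne_zero n) ht'
  exact this key.symm
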